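/- (Alon–Shikhelman) Let k ≥ 2 and let G be a simple graph on n vertices that contains no copy of the friendship graph F_k. Then the number of triangles of G satisfies t(G) < (9k − 15)(k + 1)n. -/

import Mathlib

open Classical in
/-- Adjacency matrix of a simple graph, over `ℝ`. -/
noncomputable def adjMat {V : Type*} [Fintype V] (G : SimpleGraph V) : Matrix V V ℝ :=
  Matrix.of fun i j => if G.Adj i j then 1 else 0

/-- Spectral radius (largest eigenvalue) of a finite simple graph: the supremum of the
real spectrum of its adjacency matrix. -/
noncomputable def specRad {V : Type*} [Fintype V] [DecidableEq V]
    (G : SimpleGraph V) : ℝ :=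
  sSup (spectrum ℝ (adjMat G))

/-- Number of edges of a graph. -/
noncomputable def edgeCount {V : Type*} (G : SimpleGraph V) : ℕ := G.edgeSet.ncard

/-- Number of triangles of a graph. -/
noncomputable def triangleCount {V : Type*} (G : SimpleGraph V) : ℕ :=
  {t : Finset V | G.IsNClique 3 t}.ncard

/-- Triangle covering number: minimum size of a vertex set meeting every triangle. -/
noncomputable def triangleCoverNumber {V : Type*} [Fintype V] [DecidableEq V]
    (G : SimpleGraph V) : ℕ :=
  sInf {k | ∃ s : Finset V, s.card = k ∧ ∀ t : Finset V, G.IsNClique 3 t → ∃ v ∈ s, v ∈ t}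

/-- Number of bowties: unordered pairs of triangles sharing exactly one vertex. -/
noncomputable def bowtieCount {V : Type*} [DecidableEq V] (G : SimpleGraph V) : ℕ :=
  {p : Finset (Finset V) | p.card = 2 ∧ (∀ t ∈ p, G.IsNClique 3 t) ∧
    ∀ t₁ ∈ p, ∀ t₂ ∈ p, t₁ ≠ t₂ → (t₁ ∩ t₂).card = 1}.ncard

/-- Complete bipartite graph on `Fin n` with parts `[0, s)` and `[s, n)`. -/
def biGraph (n s : ℕ) : SimpleGraph (Fin n) :=
  SimpleGraph.fromRel (fun i j => (i : ℕ) < s ∧ s ≤ (j : ℕ))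

/-- `K_{s,t}^{+2}`: complete bipartite with two disjoint extra edges `{0,1}`, `{2,3}`
inside the part `[0, s)`. -/
def biGraphPlus2 (n s : ℕ) : SimpleGraph (Fin n) :=
  SimpleGraph.fromRel (fun i j => ((i : ℕ) < s ∧ s ≤ (j : ℕ)) ∨
    ((i : ℕ) = 0 ∧ (j : ℕ) = 1) ∨ ((i : ℕ) = 2 ∧ (j : ℕ) = 3))

/-- `K_{s,t}^{+}`: complete bipartite with one extra edge `{0,1}` inside the part `[0, s)`. -/
def biGraphPlus1 (n s : ℕ) : SimpleGraph (Fin n) :=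
  SimpleGraph.fromRel (fun i j => ((i : ℕ) < s ∧ s ≤ (j : ℕ)) ∨ ((i : ℕ) = 0 ∧ (j : ℕ) = 1))

/-- `K_{s,t}^{++}`: complete bipartite with one extra edge in each part. -/
def biGraphPlusPlus (n s : ℕ) : SimpleGraph (Fin n) :=
  SimpleGraph.fromRel (fun i j => ((i : ℕ) < s ∧ s ≤ (j : ℕ)) ∨
    ((i : ℕ) = 0 ∧ (j : ℕ) = 1) ∨ ((i : ℕ) = s ∧ (j : ℕ) = s + 1))

/-- The friendship graph `F_k`: `k` triangles meeting in the common vertex `0`. -/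
def friendship (k : ℕ) : SimpleGraph (Fin (2 * k + 1)) :=
  SimpleGraph.fromRel (fun a b => ((a : ℕ) = 0 ∧ (b : ℕ) ≠ 0) ∨
    ((a : ℕ) % 2 = 1 ∧ (b : ℕ) = (a : ℕ) + 1))

/-- `G` contains a copy of `H` (a subgraph isomorphic to `H`). -/
def ContainsCopy {α β : Type*} (H : SimpleGraph α) (G : SimpleGraph β) : Prop :=
  ∃ f : α → β, Function.Injective f ∧ ∀ a b, H.Adj a b → G.Adj (f a) (f b)

/-- Number of edges of `G` with both endpoints in `S`. -/
noncomputable def eIn {V : Type*} (G : SimpleGraph V) (S : Finset V) : ℕ :=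
  {e ∈ G.edgeSet | ∀ v ∈ e, v ∈ S}.ncard

/-- Number of edges of `G` with one endpoint in `S` and the other in `T`. -/
noncomputable def eCross {V : Type*} (G : SimpleGraph V) (S T : Finset V) : ℕ :=
  {e ∈ G.edgeSet | ∃ u ∈ S, ∃ v ∈ T, e = s(u, v)}.ncard

/-- `G` is `ε`-far from being bipartite: every spanning subgraph obtained by removing
fewer than `ε` edges is non-bipartite. -/
def FarFromBipartite {V : Type*} (G : SimpleGraph V) (ε : ℝ) : Prop :=
  ∀ G' : SimpleGraph V, G' ≤ G → (edgeCount G : ℝ) - ε < (edgeCount G' : ℝ) →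
    ¬ G'.Colorable 2

namespace Stmt12Aux

open Finset

/-! ### The embedding builder: a "star of k disjoint adjacent pairs" gives `F_k`. -/

def emb {n k : ℕ} (w : Fin n) (P : Fin k → Fin n × Fin n) (x : Fin (2 * k + 1)) : Fin n :=
  if h0 : (x : ℕ) = 0 then w
  else if (x : ℕ) % 2 = 1 then (P ⟨((x : ℕ) - 1) / 2, by have := x.isLt; omega⟩).1
  else (P ⟨((x : ℕ) - 1) / 2, by have := x.isLt; omega⟩).2

lemma emb_cases {k : ℕ} (x : Fin (2 * k + 1)) :
    (x : ℕ) = 0 ∨ (∃ i : Fin k, (x : ℕ) = 2 * (i : ℕ) + 1) ∨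
      (∃ i : Fin k, (x : ℕ) = 2 * (i : ℕ) + 2) := by
  have hx := x.isLt
  by_cases h0 : (x : ℕ) = 0
  · exact Or.inl h0
  · by_cases hp : (x : ℕ) % 2 = 1
    · exact Or.inr (Or.inl ⟨⟨((x : ℕ) - 1) / 2, by omega⟩, by simp; omega⟩)
    · exact Or.inr (Or.inr ⟨⟨((x : ℕ) - 1) / 2, by omega⟩, by simp; omega⟩)

lemma emb_zero {n k : ℕ} (w : Fin n) (P : Fin k → Fin n × Fin n) (x : Fin (2 * k + 1))
    (hx : (x : ℕ) = 0) : emb w P x = w := by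
  rw [emb, dif_pos hx]

lemma emb_fst {n k : ℕ} (w : Fin n) (P : Fin k → Fin n × Fin n) (x : Fin (2 * k + 1))
    (i : Fin k) (hx : (x : ℕ) = 2 * (i : ℕ) + 1) : emb w P x = (P i).1 := by
  rw [emb, dif_neg (by omega), if_pos (by omega)]
  have h5 : (⟨((x : ℕ) - 1) / 2, by have := x.isLt; omega⟩ : Fin k) = i := by
    simp only [Fin.ext_iff, Fin.val_mk]; omega
  rw [h5]

lemma emb_snd {n k : ℕ} (w : Fin n) (P : Fin k → Fin n × Fin n) (x : Fin (2 * k + 1))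
    (i : Fin k) (hx : (x : ℕ) = 2 * (i : ℕ) + 2) : emb w P x = (P i).2 := by
  rw [emb, dif_neg (by omega), if_neg (by omega)]
  have h5 : (⟨((x : ℕ) - 1) / 2, by have := x.isLt; omega⟩ : Fin k) = i := by
    simp only [Fin.ext_iff, Fin.val_mk]; omega
  rw [h5]

lemma builder {n k : ℕ} {G : SimpleGraph (Fin n)} (w : Fin n) (P : Fin k → Fin n × Fin n)
    (h1 : ∀ i, G.Adj w (P i).1) (h2 : ∀ i, G.Adj w (P i).2)
    (h3 : ∀ i, G.Adj (P i).1 (P i).2)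
    (h4 : ∀ i j : Fin k, i ≠ j → (P i).1 ≠ (P j).1 ∧ (P i).1 ≠ (P j).2 ∧ (P i).2 ≠ (P j).2) :
    ContainsCopy (friendship k) G := by
  have h4' : ∀ i j : Fin k, i ≠ j → (P i).2 ≠ (P j).1 :=
    fun i j hij => Ne.symm (h4 j i hij.symm).2.1
  have hne : ∀ i j : Fin k, ¬ (i : ℕ) = (j : ℕ) → i ≠ j := by
    intro i j hv he; exact hv (congrArg Fin.val he)
  refine ⟨emb w P, ?_, ?_⟩
  · intro x y hxy
    rcases emb_cases x with hx | ⟨i, hx⟩ | ⟨i, hx⟩ <;>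
      rcases emb_cases y with hy | ⟨j, hy⟩ | ⟨j, hy⟩
    · exact Fin.ext (by omega)
    · rw [emb_zero w P x hx, emb_fst w P y j hy] at hxy
      exact absurd hxy (h1 j).ne
    · rw [emb_zero w P x hx, emb_snd w P y j hy] at hxy
      exact absurd hxy (h2 j).ne
    · rw [emb_fst w P x i hx, emb_zero w P y hy] at hxy
      exact absurd hxy.symm (h1 i).ne
    · rw [emb_fst w P x i hx, emb_fst w P y j hy] at hxy
      by_cases hij : (i : ℕ) = (j : ℕ)
      · exact Fin.ext (by omega)
      · exact absurd hxy (h4 i j (hne i j hij)).1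
    · rw [emb_fst w P x i hx, emb_snd w P y j hy] at hxy
      by_cases hij : (i : ℕ) = (j : ℕ)
      · exact absurd hxy (by rw [show i = j from Fin.ext hij]; exact (h3 j).ne)
      · exact absurd hxy (h4 i j (hne i j hij)).2.1
    · rw [emb_snd w P x i hx, emb_zero w P y hy] at hxy
      exact absurd hxy.symm (h2 i).ne
    · rw [emb_snd w P x i hx, emb_fst w P y j hy] at hxy
      by_cases hij : (i : ℕ) = (j : ℕ)
      · exact absurd hxy.symm (by rw [show i = j from Fin.ext hij]; exact (h3 j).ne)
      · exact absurd hxy (h4' i j (hne i j hij))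
    · rw [emb_snd w P x i hx, emb_snd w P y j hy] at hxy
      by_cases hij : (i : ℕ) = (j : ℕ)
      · exact Fin.ext (by omega)
      · exact absurd hxy (h4 i j (hne i j hij)).2.2
  · intro a b hab
    rw [friendship, SimpleGraph.fromRel_adj] at hab
    obtain ⟨hab0, hr | hr⟩ := hab
    · rcases hr with ⟨ha, hb⟩ | ⟨ha, hb⟩
      · rw [emb_zero w P a ha]
        rcases emb_cases b with h | ⟨i, h⟩ | ⟨i, h⟩
        · exact absurd h hb
        · rw [emb_fst w P b i h]; exact h1 i
        · rw [emb_snd w P b i h]; exact h2 i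
      · rcases emb_cases a with h | ⟨i, h⟩ | ⟨i, h⟩
        · omega
        · rw [emb_fst w P a i h, emb_snd w P b i (by omega)]; exact h3 i
        · omega
    · rcases hr with ⟨hb, ha⟩ | ⟨hb, ha⟩
      · rw [emb_zero w P b hb]
        rcases emb_cases a with h | ⟨i, h⟩ | ⟨i, h⟩
        · exact absurd h ha
        · rw [emb_fst w P a i h]; exact (h1 i).symm
        · rw [emb_snd w P a i h]; exact (h2 i).symm
      · rcases emb_cases b with h | ⟨i, h⟩ | ⟨i, h⟩
        · omega
        · rw [emb_fst w P b i h, emb_snd w P a i (by omega)]; exact (h3 i).symm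
        · omega

/-! ### Triangles, books, pages, heaviness -/

variable {n : ℕ} (G : SimpleGraph (Fin n))

open Classical in
noncomputable def Tri : Finset (Finset (Fin n)) :=
  Finset.univ.filter (fun T => G.IsNClique 3 T)

open Classical in
noncomputable def pages (u v : Fin n) : Finset (Fin n) :=
  Finset.univ.filter (fun x => G.Adj u x ∧ G.Adj v x)

open Classical in
noncomputable def book (u v : Fin n) : Finset (Finset (Fin n)) :=
  (Tri G).filter (fun T => u ∈ T ∧ v ∈ T)

def Heavy (k : ℕ) (u v : Fin n) : Prop := 2 * k - 1 ≤ (book G u v).card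

lemma mem_Tri {T : Finset (Fin n)} : T ∈ Tri G ↔ G.IsNClique 3 T := by
  simp [Tri]

lemma Tri_card {T : Finset (Fin n)} (h : T ∈ Tri G) : T.card = 3 :=
  ((mem_Tri G).1 h).2

lemma Tri_adj {T : Finset (Fin n)} (h : T ∈ Tri G) {u v : Fin n}
    (hu : u ∈ T) (hv : v ∈ T) (huv : u ≠ v) : G.Adj u v :=
  ((mem_Tri G).1 h).1 hu hv huv

lemma mem_pages {u v x : Fin n} : x ∈ pages G u v ↔ G.Adj u x ∧ G.Adj v x := by
  simp [pages]

lemma mem_book {u v : Fin n} {T : Finset (Fin n)} :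
    T ∈ book G u v ↔ T ∈ Tri G ∧ u ∈ T ∧ v ∈ T := by
  simp [book, and_assoc]

lemma book_symm (u v : Fin n) : book G u v = book G v u := by
  apply Finset.filter_congr
  intro T _
  simp only [and_comm]

lemma Heavy_symm {k : ℕ} {u v : Fin n} (h : Heavy G k u v) : Heavy G k v u := by
  rw [Heavy, ← book_symm]; exact h

lemma third_spec {u v : Fin n} (huv : u ≠ v) {T : Finset (Fin n)} (hT : T ∈ book G u v) :
    ∃ x, x ∈ T ∧ x ≠ u ∧ x ≠ v ∧ T = {u, v, x} := by
  obtain ⟨hTri, hu, hv⟩ := (mem_book G).1 hT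
  have hsub : {u, v} ⊆ T := by
    intro z hz; rcases Finset.mem_insert.1 hz with rfl | hz
    · exact hu
    · rw [Finset.mem_singleton.1 hz]; exact hv
  have hcard : (T \ {u, v}).card = 1 := by
    rw [Finset.card_sdiff_of_subset hsub, Tri_card G hTri, Finset.card_insert_of_notMem (by simpa using huv),
      Finset.card_singleton]
  obtain ⟨x, hx⟩ := Finset.card_eq_one.1 hcard
  have hxmem : x ∈ T \ {u, v} := by rw [hx]; exact Finset.mem_singleton_self x
  rw [Finset.mem_sdiff] at hxmem
  refine ⟨x, hxmem.1, ?_, ?_, ?_⟩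
  · intro h; exact hxmem.2 (by simp [h])
  · intro h; exact hxmem.2 (by simp [h])
  · have : T = {u, v} ∪ (T \ {u, v}) := by
      rw [Finset.union_sdiff_of_subset hsub]
    rw [this, hx]
    ext z; simp [or_assoc]

lemma book_card_le_pages {u v : Fin n} (huv : u ≠ v) :
    (book G u v).card ≤ (pages G u v).card := by
  classical
  have hsub : book G u v ⊆ (pages G u v).image (fun x => ({u, v, x} : Finset (Fin n))) := by
    intro T hT
    obtain ⟨x, hxT, hxu, hxv, hTeq⟩ := third_spec G huv hT
    obtain ⟨hTri, hu, hv⟩ := (mem_book G).1 hT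
    refine Finset.mem_image.2 ⟨x, ?_, hTeq.symm⟩
    exact (mem_pages G).2 ⟨Tri_adj G hTri hu hxT (Ne.symm hxu),
      Tri_adj G hTri hv hxT (Ne.symm hxv)⟩
  calc (book G u v).card ≤ ((pages G u v).image (fun x => ({u, v, x} : Finset (Fin n)))).card :=
        Finset.card_le_card hsub
    _ ≤ (pages G u v).card := Finset.card_image_le

lemma heavy_pages {k : ℕ} {u v : Fin n} (h : Heavy G k u v) (huv : u ≠ v) :
    2 * k - 1 ≤ (pages G u v).card :=
  le_trans h (book_card_le_pages G huv)

lemma heavy_adj {k : ℕ} (hk : 1 ≤ k) {u v : Fin n} (h : Heavy G k u v) (huv : u ≠ v) :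
    G.Adj u v := by
  have hpos : 0 < (book G u v).card := lt_of_lt_of_le (by omega) h
  obtain ⟨T, hT⟩ := Finset.card_pos.1 hpos
  obtain ⟨hTri, hu, hv⟩ := (mem_book G).1 hT
  exact Tri_adj G hTri hu hv huv

lemma light_book {k : ℕ} {u v : Fin n} (h : ¬ Heavy G k u v) :
    (book G u v).card ≤ 2 * k - 2 := by
  rw [Heavy] at h
  omega

end Stmt12Aux
namespace Stmt12Aux

open Finset

variable {n : ℕ} (G : SimpleGraph (Fin n))

lemma greedy {k : ℕ} (c : Fin n) (u : Fin k → Fin n)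
    (hpg : ∀ i, 2 * k - 1 ≤ (pages G c (u i)).card)
    (m : ℕ) (hm : m ≤ k) :
    ∃ a : Fin m → Fin n, Function.Injective a ∧
      ∀ j : Fin m, a j ∈ pages G c (u (Fin.castLE hm j)) ∧ ∀ i : Fin k, a j ≠ u i := by
  have hirr : ∀ i x, x ∈ pages G c (u i) → x ≠ u i := by
    intro i x hx
    exact (((mem_pages G).1 hx).2).ne'
  induction m with
  | zero => exact ⟨Fin.elim0, fun j => j.elim0, fun j => j.elim0⟩
  | succ m ih =>
    obtain ⟨a, ha1, ha2⟩ := ih (by omega)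
    set um : Fin k := Fin.castLE hm (Fin.last m) with hum
    classical
    set forb : Finset (Fin n) :=
      (Finset.univ.image u) ∪ (Finset.univ.image a) with hforb
    have hforbcard : forb.card ≤ k + m := by
      calc forb.card ≤ (Finset.univ.image u).card + (Finset.univ.image a).card :=
            Finset.card_union_le _ _
        _ ≤ k + m := by
            have h1 := Finset.card_image_le (s := (Finset.univ : Finset (Fin k))) (f := u)
            have h2 := Finset.card_image_le (s := (Finset.univ : Finset (Fin m))) (f := a)
            simp at h1 h2
            omega
    have humem : ∀ i : Fin k, u i ∈ forb := fun i =>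
      Finset.mem_union_left _ (Finset.mem_image_of_mem u (Finset.mem_univ _))
    have hamem : ∀ j : Fin m, a j ∈ forb := fun j =>
      Finset.mem_union_right _ (Finset.mem_image_of_mem a (Finset.mem_univ _))
    have hinter : (pages G c (u um)) ∩ forb ⊆ forb.erase (u um) := by
      intro x hx
      rw [Finset.mem_inter] at hx
      exact Finset.mem_erase.2 ⟨hirr um x hx.1, hx.2⟩
    have hne : ((pages G c (u um)) \ forb).Nonempty := by
      rw [← Finset.card_pos]
      have hle : ((pages G c (u um)) ∩ forb).card ≤ k + m - 1 := by
        calc _ ≤ (forb.erase (u um)).card := Finset.card_le_card hinter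
          _ = forb.card - 1 := Finset.card_erase_of_mem (humem um)
          _ ≤ k + m - 1 := by omega
      have hid := Finset.card_sdiff_add_card_inter (pages G c (u um)) forb
      have hpg' := hpg um
      omega
    obtain ⟨x, hx⟩ := hne
    rw [Finset.mem_sdiff] at hx
    refine ⟨Fin.snoc a x, ?_, ?_⟩
    · intro p q hpq
      rcases Fin.eq_castSucc_or_eq_last p with ⟨p', rfl⟩ | rfl <;>
        rcases Fin.eq_castSucc_or_eq_last q with ⟨q', rfl⟩ | rfl
      · rw [Fin.snoc_castSucc, Fin.snoc_castSucc] at hpq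
        exact congrArg Fin.castSucc (ha1 hpq)
      · rw [Fin.snoc_castSucc, Fin.snoc_last] at hpq
        exact absurd (hpq ▸ hamem p') hx.2
      · rw [Fin.snoc_castSucc, Fin.snoc_last] at hpq
        exact absurd (hpq ▸ hamem q') hx.2
      · rfl
    · intro j
      rcases Fin.eq_castSucc_or_eq_last j with ⟨j', rfl⟩ | rfl
      · rw [Fin.snoc_castSucc]
        have hcast : Fin.castLE hm j'.castSucc = Fin.castLE (by omega : m ≤ k) j' :=
          Fin.ext rfl
        rw [hcast]
        exact ha2 j'
      · rw [Fin.snoc_last]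
        exact ⟨hx.1, fun i hxi => absurd (hxi ▸ humem i) hx.2⟩

lemma enum_of_card {α : Type*} {s : Finset α} {k : ℕ} (hs : s.card = k) :
    ∃ e : Fin k → α, Function.Injective e ∧ ∀ i, e i ∈ s := by
  refine ⟨fun i => (s.equivFin.symm (Fin.cast hs.symm i) : _), ?_, ?_⟩
  · intro i j hij
    have := s.equivFin.symm.injective (Subtype.ext hij)
    simpa [Fin.ext_iff] using congrArg Fin.val this
  · intro i
    exact (s.equivFin.symm (Fin.cast hs.symm i)).2

open Classical in
/-- **Claim A**: at most `k-1` heavy edges at any vertex. -/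
lemma heavy_star {k : ℕ} (hk : 2 ≤ k) (hfree : ¬ ContainsCopy (friendship k) G) (c : Fin n) :
    (Finset.univ.filter (fun u => u ≠ c ∧ Heavy G k c u)).card ≤ k - 1 := by
  classical
  by_contra hcon
  have hk2 : k ≤ (Finset.univ.filter (fun u => u ≠ c ∧ Heavy G k c u)).card := by omega
  obtain ⟨s, hs_sub, hs_card⟩ := Finset.exists_subset_card_eq hk2
  obtain ⟨u, hu_inj, hu_mem⟩ := enum_of_card hs_card
  have hprop : ∀ i, u i ≠ c ∧ Heavy G k c (u i) := by
    intro i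
    have := hs_sub (hu_mem i)
    simpa using (Finset.mem_filter.1 this).2
  have hpg : ∀ i, 2 * k - 1 ≤ (pages G c (u i)).card := fun i =>
    heavy_pages G (hprop i).2 (Ne.symm (hprop i).1)
  obtain ⟨a, ha_inj, ha2⟩ := greedy G c u hpg k le_rfl
  have hA : ∀ i, a i ∈ pages G c (u i) := by
    intro i
    have h := (ha2 i).1
    have hcast : Fin.castLE le_rfl i = i := Fin.ext rfl
    rwa [hcast] at h
  apply hfree
  refine builder c (fun i => (u i, a i)) ?_ ?_ ?_ ?_
  · intro i; exact heavy_adj G (by omega) (hprop i).2 (Ne.symm (hprop i).1)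
  · intro i; exact ((mem_pages G).1 (hA i)).1
  · intro i; exact ((mem_pages G).1 (hA i)).2
  · intro i j hij
    exact ⟨fun h => hij (hu_inj h), fun h => ((ha2 j).2 i) h.symm, fun h => hij (ha_inj h)⟩

/-! ### Link pairs, matchings, covers -/

open Classical in
noncomputable def linkP (w : Fin n) : Finset (Finset (Fin n)) :=
  ((Tri G).filter (fun T => w ∈ T)).image (fun T => T.erase w)

lemma mem_linkP_of {w : Fin n} {T : Finset (Fin n)} (hT : T ∈ Tri G) (hw : w ∈ T) :
    T.erase w ∈ linkP G w := by
  rw [linkP]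
  apply Finset.mem_image_of_mem
  simp [hT, hw, Finset.mem_filter]

lemma linkP_prop {w : Fin n} {p : Finset (Fin n)} (hp : p ∈ linkP G w) :
    p.card = 2 ∧ w ∉ p ∧ insert w p ∈ Tri G := by
  rw [linkP] at hp
  obtain ⟨T, hT, hTe⟩ := Finset.mem_image.1 hp
  rw [Finset.mem_filter] at hT
  obtain ⟨hTri, hw⟩ := hT
  have hw' : w ∈ T := hw
  subst hTe
  refine ⟨?_, Finset.notMem_erase w T, ?_⟩
  · rw [Finset.card_erase_of_mem hw', Tri_card G hTri]
  · rw [Finset.insert_erase hw']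
    exact hTri

lemma linkP_adj {w : Fin n} {p : Finset (Fin n)} (hp : p ∈ linkP G w) :
    (∀ x ∈ p, G.Adj w x) ∧ (∀ x ∈ p, ∀ y ∈ p, x ≠ y → G.Adj x y) := by
  obtain ⟨hc, hw, hins⟩ := linkP_prop G hp
  constructor
  · intro x hx
    exact Tri_adj G hins (Finset.mem_insert_self w p) (Finset.mem_insert_of_mem hx)
      (fun h => hw (h ▸ hx))
  · intro x hx y hy hxy
    exact Tri_adj G hins (Finset.mem_insert_of_mem hx) (Finset.mem_insert_of_mem hy) hxy

lemma matching_bound {k : ℕ} (hk : 2 ≤ k) (hfree : ¬ ContainsCopy (friendship k) G)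
    (w : Fin n) {M : Finset (Finset (Fin n))} (hM : M ⊆ linkP G w)
    (hdisj : ∀ p ∈ M, ∀ q ∈ M, p ≠ q → Disjoint p q) : M.card ≤ k - 1 := by
  classical
  by_contra hcon
  have hk2 : k ≤ M.card := by omega
  obtain ⟨s, hs_sub, hs_card⟩ := Finset.exists_subset_card_eq hk2
  obtain ⟨e, he_inj, he_mem⟩ := enum_of_card hs_card
  have heM : ∀ i, e i ∈ M := fun i => hs_sub (he_mem i)
  have hsplit : ∀ i : Fin k, ∃ x y, x ≠ y ∧ e i = {x, y} :=
    fun i => Finset.card_eq_two.1 (linkP_prop G (hM (heM i))).1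
  choose X Y hXY hpair using hsplit
  have hXmem : ∀ i, X i ∈ e i := fun i => by rw [hpair i]; simp
  have hYmem : ∀ i, Y i ∈ e i := fun i => by rw [hpair i]; simp
  have hDisj : ∀ i j : Fin k, i ≠ j → Disjoint (e i) (e j) :=
    fun i j hij => hdisj _ (heM i) _ (heM j) (fun h => hij (he_inj h))
  apply hfree
  refine builder w (fun i => (X i, Y i)) ?_ ?_ ?_ ?_
  · intro i; exact (linkP_adj G (hM (heM i))).1 _ (hXmem i)
  · intro i; exact (linkP_adj G (hM (heM i))).1 _ (hYmem i)
  · intro i; exact (linkP_adj G (hM (heM i))).2 _ (hXmem i) _ (hYmem i) (hXY i)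
  · intro i j hij
    have hd := hDisj i j hij
    refine ⟨?_, ?_, ?_⟩
    · intro h
      have h' : X i = X j := h
      exact (Finset.disjoint_left.1 hd) (hXmem i) (h' ▸ hXmem j)
    · intro h
      have h' : X i = Y j := h
      exact (Finset.disjoint_left.1 hd) (hXmem i) (h' ▸ hYmem j)
    · intro h
      have h' : Y i = Y j := h
      exact (Finset.disjoint_left.1 hd) (hYmem i) (h' ▸ hYmem j)

lemma exists_cover {k : ℕ} (hk : 2 ≤ k) (hfree : ¬ ContainsCopy (friendship k) G) (w : Fin n) :
    ∃ C : Finset (Fin n), C.card ≤ 2 * k - 2 ∧ ∀ p ∈ linkP G w, ∃ c ∈ C, c ∈ p := by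
  classical
  set fam := ((linkP G w).powerset.filter
    (fun M => ∀ p ∈ M, ∀ q ∈ M, p ≠ q → Disjoint p q)) with hfam
  have hfamne : fam.Nonempty := ⟨∅, by simp [hfam]⟩
  obtain ⟨M, hMfam, hMmax⟩ := Finset.exists_max_image fam Finset.card hfamne
  rw [hfam, Finset.mem_filter, Finset.mem_powerset] at hMfam
  obtain ⟨hMsub, hMdisj⟩ := hMfam
  have hMk : M.card ≤ k - 1 := matching_bound G hk hfree w hMsub hMdisj
  refine ⟨M.biUnion id, ?_, ?_⟩
  · calc (M.biUnion id).card ≤ ∑ p ∈ M, (id p).card := Finset.card_biUnion_le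
      _ = ∑ p ∈ M, 2 := Finset.sum_congr rfl (fun p hp => (linkP_prop G (hMsub hp)).1)
      _ = 2 * M.card := by rw [Finset.sum_const, smul_eq_mul, mul_comm]
      _ ≤ 2 * k - 2 := by omega
  · intro p hp
    by_contra hno
    push_neg at hno
    have hpsub : ∀ q ∈ M, ∀ x ∈ q, x ∉ p := by
      intro q hq x hxq hxp
      exact hno x (Finset.mem_biUnion.2 ⟨q, hq, hxq⟩) hxp
    have hpM : p ∉ M := by
      intro hpM
      have hpne : p.Nonempty := Finset.card_pos.1 (by rw [(linkP_prop G hp).1]; omega)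
      obtain ⟨x, hx⟩ := hpne
      exact hpsub p hpM x hx hx
    have hfam' : insert p M ∈ fam := by
      rw [hfam, Finset.mem_filter, Finset.mem_powerset]
      refine ⟨Finset.insert_subset hp hMsub, ?_⟩
      intro p1 hp1 p2 hp2 hne12
      have key : ∀ q ∈ M, Disjoint p q := fun q hq =>
        Finset.disjoint_left.2 (fun x hxp hxq => hpsub q hq x hxq hxp)
      rcases Finset.mem_insert.1 hp1 with h1 | h1 <;>
        rcases Finset.mem_insert.1 hp2 with h2 | h2
      · exact absurd (h1.trans h2.symm) hne12
      · rw [h1]; exact key p2 h2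
      · rw [h2]; exact (key p1 h1).symm
      · exact hMdisj p1 h1 p2 h2 hne12
    have := hMmax _ hfam'
    rw [Finset.card_insert_of_notMem hpM] at this
    omega

end Stmt12Aux
namespace Stmt12Aux

open Finset

variable {n : ℕ} (G : SimpleGraph (Fin n))

/-- a pair/triangle set contains a heavy pair -/
def HP (k : ℕ) (p : Finset (Fin n)) : Prop := ∃ u ∈ p, ∃ v ∈ p, u ≠ v ∧ Heavy G k u v

open Classical in
lemma heavy_link_bound {k : ℕ} (hk : 2 ≤ k) (hfree : ¬ ContainsCopy (friendship k) G)
    (w : Fin n) :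
    ((linkP G w).filter (fun p => HP G k p)).card ≤ (2 * k - 2) * (k - 1) := by
  obtain ⟨C, hCcard, hCcov⟩ := exists_cover G hk hfree w
  set Hs := (linkP G w).filter (fun p => HP G k p) with hHs
  have hsub : Hs ⊆ C.biUnion (fun c => Hs.filter (fun p => c ∈ p)) := by
    intro p hp
    have hpl : p ∈ linkP G w := (Finset.mem_filter.1 hp).1
    obtain ⟨c, hcC, hcp⟩ := hCcov p hpl
    exact Finset.mem_biUnion.2 ⟨c, hcC, Finset.mem_filter.2 ⟨hp, hcp⟩⟩
  have hinner : ∀ c : Fin n, (Hs.filter (fun p => c ∈ p)).card ≤ k - 1 := by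
    intro c
    have hsub2 : Hs.filter (fun p => c ∈ p) ⊆
        (Finset.univ.filter (fun x => x ≠ c ∧ Heavy G k c x)).image
          (fun x => insert c {x}) := by
      intro p hp
      rw [Finset.mem_filter] at hp
      obtain ⟨hpHs, hcp⟩ := hp
      rw [hHs, Finset.mem_filter] at hpHs
      obtain ⟨hpl, hHP⟩ := hpHs
      obtain ⟨a, b, hab, hpab⟩ := Finset.card_eq_two.1 (linkP_prop G hpl).1
      -- find the element of p other than c
      have hx : ∃ x, x ≠ c ∧ p = insert c {x} := by
        rw [hpab] at hcp
        rcases Finset.mem_insert.1 hcp with rfl | hcb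
        · exact ⟨b, fun h => hab h.symm, by rw [hpab]⟩
        · have hcb' : c = b := Finset.mem_singleton.1 hcb
          subst hcb'
          exact ⟨a, hab, by rw [hpab]; ext z; simp [or_comm]⟩
      obtain ⟨x, hxc, hpx⟩ := hx
      have hHcx : Heavy G k c x := by
        obtain ⟨u, hu, v, hv, huv, hH⟩ := hHP
        rw [hpx] at hu hv
        rcases Finset.mem_insert.1 hu with rfl | hu' <;>
          rcases Finset.mem_insert.1 hv with rfl | hv'
        · exact absurd rfl huv
        · rwa [Finset.mem_singleton.1 hv'] at hH
        · rw [Finset.mem_singleton.1 hu'] at hH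
          exact Heavy_symm G hH
        · rw [Finset.mem_singleton.1 hu', Finset.mem_singleton.1 hv'] at huv
          exact absurd rfl huv
      exact Finset.mem_image.2 ⟨x, Finset.mem_filter.2 ⟨Finset.mem_univ x, hxc, hHcx⟩, hpx.symm⟩
    calc (Hs.filter (fun p => c ∈ p)).card
        ≤ ((Finset.univ.filter (fun x => x ≠ c ∧ Heavy G k c x)).image
            (fun x => insert c {x})).card := Finset.card_le_card hsub2
      _ ≤ (Finset.univ.filter (fun x => x ≠ c ∧ Heavy G k c x)).card := Finset.card_image_le
      _ ≤ k - 1 := heavy_star G hk hfree c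
  calc Hs.card ≤ (C.biUnion (fun c => Hs.filter (fun p => c ∈ p))).card :=
        Finset.card_le_card hsub
    _ ≤ ∑ c ∈ C, (Hs.filter (fun p => c ∈ p)).card := Finset.card_biUnion_le
    _ ≤ ∑ _c ∈ C, (k - 1) := Finset.sum_le_sum (fun c _ => hinner c)
    _ = C.card * (k - 1) := by rw [Finset.sum_const, smul_eq_mul]
    _ ≤ (2 * k - 2) * (k - 1) := Nat.mul_le_mul_right _ hCcard

open Classical in
lemma heavyTri_bound {k : ℕ} (hk : 2 ≤ k) (hfree : ¬ ContainsCopy (friendship k) G) :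
    ((Tri G).filter (fun T => HP G k T)).card ≤ n * ((2 * k - 2) * (k - 1)) := by
  have hsub : (Tri G).filter (fun T => HP G k T) ⊆
      Finset.univ.biUnion (fun w => ((linkP G w).filter (fun p => HP G k p)).image (insert w)) := by
    intro T hT
    rw [Finset.mem_filter] at hT
    obtain ⟨hTri, u, hu, v, hv, huv, hH⟩ := hT
    have hTb : T ∈ book G u v := (mem_book G).2 ⟨hTri, hu, hv⟩
    obtain ⟨x, hxT, hxu, hxv, _⟩ := third_spec G huv hTb
    refine Finset.mem_biUnion.2 ⟨x, Finset.mem_univ x, Finset.mem_image.2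
      ⟨T.erase x, ?_, Finset.insert_erase hxT⟩⟩
    refine Finset.mem_filter.2 ⟨mem_linkP_of G hTri hxT, ?_⟩
    exact ⟨u, Finset.mem_erase.2 ⟨fun h => hxu h.symm, hu⟩,
      v, Finset.mem_erase.2 ⟨fun h => hxv h.symm, hv⟩, huv, hH⟩
  calc ((Tri G).filter (fun T => HP G k T)).card
      ≤ (Finset.univ.biUnion
          (fun w => ((linkP G w).filter (fun p => HP G k p)).image (insert w))).card :=
        Finset.card_le_card hsub
    _ ≤ ∑ w : Fin n, (((linkP G w).filter (fun p => HP G k p)).image (insert w)).card :=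
        Finset.card_biUnion_le
    _ ≤ ∑ w : Fin n, ((linkP G w).filter (fun p => HP G k p)).card :=
        Finset.sum_le_sum (fun w _ => Finset.card_image_le)
    _ ≤ ∑ _w : Fin n, (2 * k - 2) * (k - 1) :=
        Finset.sum_le_sum (fun w _ => heavy_link_bound G hk hfree w)
    _ = n * ((2 * k - 2) * (k - 1)) := by
        rw [Finset.sum_const, smul_eq_mul, Finset.card_univ, Fintype.card_fin]

open Classical in
lemma light_fiber_bound {k : ℕ} (hk : 2 ≤ k) (hfree : ¬ ContainsCopy (friendship k) G)
    (w : Fin n) :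
    (((Tri G).filter (fun T => ¬ HP G k T)).filter (fun T => w ∈ T)).card
      ≤ (2 * k - 2) * (2 * k - 2) := by
  obtain ⟨C, hCcard, hCcov⟩ := exists_cover G hk hfree w
  set Lw := ((Tri G).filter (fun T => ¬ HP G k T)).filter (fun T => w ∈ T) with hLw
  have hmem : ∀ T ∈ Lw, T ∈ Tri G ∧ ¬ HP G k T ∧ w ∈ T := by
    intro T hT
    rw [hLw, Finset.mem_filter, Finset.mem_filter] at hT
    exact ⟨hT.1.1, hT.1.2, hT.2⟩
  have hsub : Lw ⊆ C.biUnion (fun c => Lw.filter (fun T => c ∈ T.erase w)) := by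
    intro T hT
    obtain ⟨hTri, _, hwT⟩ := hmem T hT
    obtain ⟨c, hcC, hcp⟩ := hCcov (T.erase w) (mem_linkP_of G hTri hwT)
    exact Finset.mem_biUnion.2 ⟨c, hcC, Finset.mem_filter.2 ⟨hT, hcp⟩⟩
  have hinner : ∀ c : Fin n, (Lw.filter (fun T => c ∈ T.erase w)).card ≤ 2 * k - 2 := by
    intro c
    rcases Finset.eq_empty_or_nonempty (Lw.filter (fun T => c ∈ T.erase w)) with he | hne
    · rw [he]; simp
    · obtain ⟨T0, hT0⟩ := hne
      rw [Finset.mem_filter] at hT0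
      obtain ⟨hT0Lw, hc0⟩ := hT0
      obtain ⟨hT0Tri, hT0light, hwT0⟩ := hmem T0 hT0Lw
      rw [Finset.mem_erase] at hc0
      have hlight : ¬ Heavy G k w c := by
        intro hH
        exact hT0light ⟨w, hwT0, c, hc0.2, Ne.symm hc0.1, hH⟩
      have hsub2 : Lw.filter (fun T => c ∈ T.erase w) ⊆ book G w c := by
        intro T hT
        rw [Finset.mem_filter] at hT
        obtain ⟨hTLw, hcT⟩ := hT
        obtain ⟨hTri, _, hwT⟩ := hmem T hTLw
        exact (mem_book G).2 ⟨hTri, hwT, Finset.mem_of_mem_erase hcT⟩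
      calc (Lw.filter (fun T => c ∈ T.erase w)).card ≤ (book G w c).card :=
            Finset.card_le_card hsub2
        _ ≤ 2 * k - 2 := light_book G hlight
  calc Lw.card ≤ (C.biUnion (fun c => Lw.filter (fun T => c ∈ T.erase w))).card :=
        Finset.card_le_card hsub
    _ ≤ ∑ c ∈ C, (Lw.filter (fun T => c ∈ T.erase w)).card := Finset.card_biUnion_le
    _ ≤ ∑ _c ∈ C, (2 * k - 2) := Finset.sum_le_sum (fun c _ => hinner c)
    _ = C.card * (2 * k - 2) := by rw [Finset.sum_const, smul_eq_mul]
    _ ≤ (2 * k - 2) * (2 * k - 2) := Nat.mul_le_mul_right _ hCcard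

open Classical in
lemma tri_filter_sum (S : Finset (Finset (Fin n))) (hS : ∀ T ∈ S, T.card = 3) :
    ∑ w : Fin n, (S.filter (fun T => w ∈ T)).card = 3 * S.card := by
  calc ∑ w : Fin n, (S.filter (fun T => w ∈ T)).card
      = ∑ w : Fin n, ∑ T ∈ S, (if w ∈ T then 1 else 0) :=
        Finset.sum_congr rfl (fun w _ => Finset.card_filter _ _)
    _ = ∑ T ∈ S, ∑ w : Fin n, (if w ∈ T then 1 else 0) := Finset.sum_comm
    _ = ∑ T ∈ S, T.card := by
        refine Finset.sum_congr rfl (fun T hT => ?_)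
        rw [Finset.sum_ite_mem]
        simp
    _ = ∑ _T ∈ S, 3 := Finset.sum_congr rfl hS
    _ = 3 * S.card := by rw [Finset.sum_const, smul_eq_mul, mul_comm]

open Classical in
lemma main_nat_bound {k : ℕ} (hk : 2 ≤ k) (hfree : ¬ ContainsCopy (friendship k) G) :
    3 * (Tri G).card ≤ n * (10 * (k - 1) * (k - 1)) := by
  set TH := (Tri G).filter (fun T => HP G k T) with hTH
  set TL := (Tri G).filter (fun T => ¬ HP G k T) with hTL
  have hdecomp : TH.card + TL.card = (Tri G).card :=
    Finset.card_filter_add_card_filter_not (p := fun T => HP G k T)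
  have hH : TH.card ≤ n * ((2 * k - 2) * (k - 1)) := heavyTri_bound G hk hfree
  have hL : 3 * TL.card ≤ n * ((2 * k - 2) * (2 * k - 2)) := by
    have hsum := tri_filter_sum TL (fun T hT => Tri_card G (Finset.mem_filter.1 hT).1)
    have hbd : ∑ w : Fin n, (TL.filter (fun T => w ∈ T)).card
        ≤ ∑ _w : Fin n, (2 * k - 2) * (2 * k - 2) :=
      Finset.sum_le_sum (fun w _ => light_fiber_bound G hk hfree w)
    rw [hsum] at hbd
    calc 3 * TL.card ≤ ∑ _w : Fin n, (2 * k - 2) * (2 * k - 2) := hbd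
      _ = n * ((2 * k - 2) * (2 * k - 2)) := by
          rw [Finset.sum_const, smul_eq_mul, Finset.card_univ, Fintype.card_fin]
  have e1 : (2 * k - 2) * (k - 1) = 2 * ((k - 1) * (k - 1)) := by
    have : 2 * k - 2 = 2 * (k - 1) := by omega
    rw [this]; ring
  have e2 : (2 * k - 2) * (2 * k - 2) = 4 * ((k - 1) * (k - 1)) := by
    have : 2 * k - 2 = 2 * (k - 1) := by omega
    rw [this]; ring
  rw [e1] at hH
  rw [e2] at hL
  calc 3 * (Tri G).card = 3 * TH.card + 3 * TL.card := by omega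
    _ ≤ 3 * (n * (2 * ((k - 1) * (k - 1)))) + n * (4 * ((k - 1) * (k - 1))) := by
        have := Nat.mul_le_mul_left 3 hH
        omega
    _ = n * (10 * (k - 1) * (k - 1)) := by ring

lemma triangleCount_eq : triangleCount G = (Tri G).card := by
  rw [triangleCount]
  have h : {t : Finset (Fin n) | G.IsNClique 3 t} = ↑(Tri G) := by
    ext T; simp [Tri]
  rw [h, Set.ncard_coe_finset]

end Stmt12Aux

/-- **Alon–Shikhelman.** If `k ≥ 2` and `G` is an `F_k`-free graph on `n ≥ 1`
vertices, then `t(G) < (9k − 15)(k + 1)n`. -/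
theorem stmt_12 (k n : ℕ) (hk : 2 ≤ k) (hn : 1 ≤ n) (G : SimpleGraph (Fin n))
    (hfree : ¬ ContainsCopy (friendship k) G) :
    (triangleCount G : ℝ) < (9 * (k : ℝ) - 15) * ((k : ℝ) + 1) * (n : ℝ) := by
  have hEq := Stmt12Aux.triangleCount_eq G
  have hN := Stmt12Aux.main_nat_bound G hk hfree
  rw [hEq]
  have hk1 : 1 ≤ k := by omega
  have hR : 3 * (((Stmt12Aux.Tri G).card : ℝ)) ≤
      (n : ℝ) * (10 * ((k : ℝ) - 1) * ((k : ℝ) - 1)) := by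
    calc (3 : ℝ) * ((Stmt12Aux.Tri G).card : ℝ)
        = ((3 * (Stmt12Aux.Tri G).card : ℕ) : ℝ) := by push_cast; ring
      _ ≤ ((n * (10 * (k - 1) * (k - 1)) : ℕ) : ℝ) := Nat.cast_le.2 hN
      _ = (n : ℝ) * (10 * ((k : ℝ) - 1) * ((k : ℝ) - 1)) := by
          push_cast [Nat.cast_sub hk1]
          ring
  have hk2 : (2 : ℝ) ≤ (k : ℝ) := by exact_mod_cast hk
  have hn1 : (1 : ℝ) ≤ (n : ℝ) := by exact_mod_cast hn
  have key : (17 : ℝ) ≤ 17 * (k : ℝ) ^ 2 + 2 * (k : ℝ) - 55 := by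
    nlinarith [sq_nonneg ((k : ℝ) - 2)]
  have key2 : (17 : ℝ) * (n : ℝ) ≤ (17 * (k : ℝ) ^ 2 + 2 * (k : ℝ) - 55) * (n : ℝ) :=
    mul_le_mul_of_nonneg_right key (by linarith)
  nlinarith [hR, key2, hn1]
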